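/- Let (Ω, F, (F_t)_{t≥0}, P) be a filtered probability space and (Ω, F̃, (F̃_t)_{t≥0}, P̃) its N-augmentation. If (X_t)_{t≥0} is a standard Brownian motion with respect to the filtration (F_t)_{t≥0} and P (i.e. a continuous (F_t)-adapted process with X_0 = 0 such that both (X_t)_{t≥0} and (X_t² − t)_{t≥0} are (F_t)-martingales under P), then (X_t)_{t≥0} is a standard Brownian motion with respect to (F̃_t)_{t≥0} and P̃. -/

import Mathlib

open MeasureTheory Set Filter
open scoped NNReal ENNReal Topology

variable {Ω : Type*}

/-- A set `A` is N-negligible with respect to the filtration `𝓕` and the set function `P`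
(the outer-measure attached to a probability measure): it is covered by countably many
sets `B n` with `B n ∈ 𝓕 n` and `P (B n) = 0`. -/
def NNegligible (𝓕 : ℝ≥0 → MeasurableSpace Ω) (P : Set Ω → ℝ≥0∞) (A : Set Ω) : Prop :=
  ∃ B : ℕ → Set Ω, (∀ n : ℕ, MeasurableSet[𝓕 (n : ℝ≥0)] (B n)) ∧
    (∀ n : ℕ, P (B n) = 0) ∧ A ⊆ ⋃ n, B n

/-- `X` is a martingale with respect to the σ-algebra `F'`, the filtration `𝓕'` and the
probability measure `P'`. -/
def IsMartingale (F' : MeasurableSpace Ω) (𝓕' : ℝ≥0 → MeasurableSpace Ω)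
    (P' : @Measure Ω F') (X : ℝ≥0 → Ω → ℝ) : Prop :=
  (∀ t : ℝ≥0, Measurable[𝓕' t] (X t)) ∧ (∀ t : ℝ≥0, Integrable (X t) P') ∧
  ∀ s t : ℝ≥0, s ≤ t → (P'[X t|𝓕' s]) =ᵐ[P'] X s

/-- `X` is a standard Brownian motion with respect to `(F', 𝓕', P')`: it is a continuous
adapted process starting from `0` such that `X` and `(X t ^ 2 - t)` are martingales. -/
def IsStdBrownianMotion (F' : MeasurableSpace Ω) (𝓕' : ℝ≥0 → MeasurableSpace Ω)
    (P' : @Measure Ω F') (X : ℝ≥0 → Ω → ℝ) : Prop :=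
  (∀ ω, Continuous fun t : ℝ≥0 => X t ω) ∧ (∀ ω, X 0 ω = 0) ∧
  IsMartingale F' 𝓕' P' X ∧
  IsMartingale F' 𝓕' P' (fun t ω => X t ω ^ 2 - (t : ℝ))

/-- Martingale property at the right-limit σ-algebra, for continuous martingales. -/
lemma setIntegral_eq_of_iInf
    {F : MeasurableSpace Ω} {𝓕 : ℝ≥0 → MeasurableSpace Ω}
    (h_mono : Monotone 𝓕) (h_le : ∀ t, 𝓕 t ≤ F)
    {P : @Measure Ω F} [IsFiniteMeasure P]
    {X : ℝ≥0 → Ω → ℝ}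
    (hcont : ∀ ω, Continuous fun t : ℝ≥0 => X t ω)
    (hmart : IsMartingale F 𝓕 P X)
    {s t : ℝ≥0} (hst : s ≤ t) {B : Set Ω}
    (hB : MeasurableSet[⨅ u ∈ Set.Ioi s, 𝓕 u] B) :
    ∫ ω in B, X t ω ∂P = ∫ ω in B, X s ω ∂P := by
  rcases eq_or_lt_of_le hst with rfl | hlt
  · rfl
  set d : ℝ≥0 := t - s with hd_def
  have hd : 0 < d := tsub_pos_of_lt hlt
  set u : ℕ → ℝ≥0 := fun n => s + d / ((n + 2 : ℕ) : ℝ≥0) with hu_def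
  have hus : ∀ n, s < u n := by
    intro n
    have h2 : (0 : ℝ≥0) < ((n + 2 : ℕ) : ℝ≥0) := by positivity
    exact lt_add_of_pos_right s (div_pos hd h2)
  have hut : ∀ n, u n ≤ t := by
    intro n
    have h1 : (1 : ℝ≥0) ≤ ((n + 2 : ℕ) : ℝ≥0) := by
      exact_mod_cast Nat.one_le_iff_ne_zero.2 (by omega)
    calc u n ≤ s + d := add_le_add_right (div_le_self zero_le h1) s
    _ = t := add_tsub_cancel_of_le hst
  have hu_lim : Tendsto u atTop (𝓝 s) := by
    have h0 : Tendsto (fun n : ℕ => d / ((n + 2 : ℕ) : ℝ≥0)) atTop (𝓝 0) :=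
      (tendsto_const_div_atTop_nhds_zero_nat d).comp (tendsto_add_atTop_nat 2)
    have h1 := h0.const_add s
    rw [add_zero] at h1
    exact h1
  set f : ℕ → Ω → ℝ := fun n => P[X t|𝓕 (u n)] with hf_def
  have hae : ∀ n, f n =ᵐ[P] X (u n) := fun n => hmart.2.2 (u n) t (hut n)
  have h_ae_tendsto : ∀ᵐ ω ∂P, Tendsto (fun n => f n ω) atTop (𝓝 (X s ω)) := by
    filter_upwards [ae_all_iff.2 hae] with ω hω
    have h1 : Tendsto (fun n => X (u n) ω) atTop (𝓝 (X s ω)) :=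
      ((hcont ω).tendsto s).comp hu_lim
    exact h1.congr fun n => (hω n).symm
  have hui : UniformIntegrable f 1 P :=
    (hmart.2.1 t).uniformIntegrable_condExp fun n => h_le (u n)
  have htm : TendstoInMeasure P f atTop (X s) :=
    tendstoInMeasure_of_tendsto_ae hui.1 h_ae_tendsto
  have hL1 : Tendsto (fun n => eLpNorm (f n - X s) 1 P) atTop (𝓝 0) :=
    tendsto_Lp_finite_of_tendstoInMeasure le_rfl ENNReal.one_ne_top hui.1
      (memLp_one_iff_integrable.2 (hmart.2.1 s)) hui.2.1 htm
  have hmain : Tendsto (fun n => ∫ ω in B, f n ω ∂P) atTop (𝓝 (∫ ω in B, X s ω ∂P)) :=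
    tendsto_setIntegral_of_L1' (X s) (hmart.2.1 s).1
      (Eventually.of_forall fun n => integrable_condExp) hL1 B
  have hconst : ∀ n, ∫ ω in B, f n ω ∂P = ∫ ω in B, X t ω ∂P := by
    intro n
    have hBn : MeasurableSet[𝓕 (u n)] B :=
      (iInf₂_le (u n) (hus n) : (⨅ v ∈ Set.Ioi s, 𝓕 v) ≤ 𝓕 (u n)) _ hB
    exact setIntegral_condExp (h_le (u n)) (hmart.2.1 t) hBn
  rw [show (fun n => ∫ ω in B, f n ω ∂P) = fun _ => ∫ ω in B, X t ω ∂P from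
    funext hconst] at hmain
  exact tendsto_nhds_unique tendsto_const_nhds hmain
/-- Transfer of the martingale property to the N-augmentation. -/
lemma isMartingale_naug
    (F : MeasurableSpace Ω) (𝓕 : ℝ≥0 → MeasurableSpace Ω)
    (h_mono : Monotone 𝓕) (h_le : ∀ t, 𝓕 t ≤ F)
    (P : @Measure Ω F) (hP : @IsProbabilityMeasure Ω F P)
    (𝓝neg : Set (Set Ω)) (h𝓝 : 𝓝neg = {A | NNegligible 𝓕 (fun s => P s) A})
    (Ftil : MeasurableSpace Ω)
    (hFtil : Ftil = MeasurableSpace.generateFrom ({A | MeasurableSet[F] A} ∪ 𝓝neg))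
    (𝓕til : ℝ≥0 → MeasurableSpace Ω)
    (h𝓕til : ∀ t : ℝ≥0, 𝓕til t =
      MeasurableSpace.generateFrom
        ({A | MeasurableSet[⨅ u ∈ Set.Ioi t, 𝓕 u] A} ∪ 𝓝neg))
    (Ptil : @Measure Ω Ftil)
    (hPtil : ∀ A : Set Ω, MeasurableSet[F] A → Ptil A = P A)
    (X : ℝ≥0 → Ω → ℝ)
    (hcont : ∀ ω, Continuous fun t : ℝ≥0 => X t ω)
    (hm : IsMartingale F 𝓕 P X) :
    IsMartingale Ftil 𝓕til Ptil X := by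
  haveI := hP
  -- basic facts about the σ-algebras
  have hFle : F ≤ Ftil := by
    intro A hA
    rw [hFtil]
    exact MeasurableSpace.measurableSet_generateFrom (Or.inl hA)
  have hPtrim : Ptil.trim hFle = P :=
    @Measure.ext Ω F _ _ fun A hA => (trim_measurableSet_eq hFle hA).trans (hPtil A hA)
  haveI hPtilprob : IsProbabilityMeasure Ptil :=
    ⟨(hPtil univ MeasurableSet.univ).trans measure_univ⟩
  have h_ms_le_F : ∀ s : ℝ≥0, (⨅ u ∈ Set.Ioi s, 𝓕 u) ≤ F := fun s =>
    le_trans (iInf₂_le (s + 1) (lt_add_of_pos_right s one_pos)) (h_le (s + 1))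
  have h𝓕_le_ms : ∀ s : ℝ≥0, 𝓕 s ≤ ⨅ u ∈ Set.Ioi s, 𝓕 u := fun s =>
    le_iInf₂ fun u hu => h_mono (le_of_lt hu)
  have h_ms_le_til : ∀ s : ℝ≥0, (⨅ u ∈ Set.Ioi s, 𝓕 u) ≤ 𝓕til s := by
    intro s A hA
    rw [h𝓕til s]
    exact MeasurableSpace.measurableSet_generateFrom (Or.inl hA)
  have hneg_null : ∀ A ∈ 𝓝neg, Ptil A = 0 := by
    intro A hA
    rw [h𝓝] at hA
    obtain ⟨B, hBmeas, hB0, hsub⟩ := hA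
    refine le_antisymm (le_trans (measure_mono hsub) ?_) zero_le
    rw [measure_iUnion_null fun n =>
      (hPtil _ (h_le _ _ (hBmeas n))).trans (hB0 n)]
  have h𝓕til_le : ∀ s : ℝ≥0, 𝓕til s ≤ Ftil := by
    intro s
    rw [h𝓕til s]
    refine MeasurableSpace.generateFrom_le fun A hA => ?_
    rcases hA with hA | hA
    · exact hFle _ (h_ms_le_F s _ hA)
    · rw [hFtil]
      exact MeasurableSpace.measurableSet_generateFrom (Or.inr hA)
  -- approximation of 𝓕til-sets by sets of the right-limit filtration
  have happrox : ∀ (s : ℝ≥0) (A : Set Ω), MeasurableSet[𝓕til s] A →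
      ∃ B, MeasurableSet[⨅ u ∈ Set.Ioi s, 𝓕 u] B ∧ Ptil (symmDiff A B) = 0 := by
    intro s
    set M : MeasurableSpace Ω :=
      { MeasurableSet' := fun A =>
          ∃ B, MeasurableSet[⨅ u ∈ Set.Ioi s, 𝓕 u] B ∧ Ptil (symmDiff A B) = 0
        measurableSet_empty := ⟨∅, @MeasurableSet.empty Ω (⨅ u ∈ Set.Ioi s, 𝓕 u), by simp⟩
        measurableSet_compl := by
          rintro A ⟨B, hB, hAB⟩
          exact ⟨Bᶜ, hB.compl, by rwa [compl_symmDiff_compl]⟩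
        measurableSet_iUnion := by
          intro A hA
          choose B hB hAB using hA
          refine ⟨⋃ n, B n, MeasurableSet.iUnion hB, ?_⟩
          have hsub : symmDiff (⋃ n, A n) (⋃ n, B n) ⊆ ⋃ n, symmDiff (A n) (B n) := by
            intro x hx
            rw [Set.mem_symmDiff] at hx
            rcases hx with ⟨hx1, hx2⟩ | ⟨hx1, hx2⟩
            · obtain ⟨n, hn⟩ := mem_iUnion.1 hx1
              exact mem_iUnion.2 ⟨n, Set.mem_symmDiff.2
                (Or.inl ⟨hn, fun h => hx2 (mem_iUnion.2 ⟨n, h⟩)⟩)⟩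
            · obtain ⟨n, hn⟩ := mem_iUnion.1 hx1
              exact mem_iUnion.2 ⟨n, Set.mem_symmDiff.2
                (Or.inr ⟨hn, fun h => hx2 (mem_iUnion.2 ⟨n, h⟩)⟩)⟩
          exact le_antisymm (le_trans (measure_mono hsub)
            (le_of_eq (measure_iUnion_null hAB))) zero_le }
    have hle : 𝓕til s ≤ M := by
      rw [h𝓕til s]
      refine MeasurableSpace.generateFrom_le fun A hA => ?_
      rcases hA with hA | hA
      · exact ⟨A, hA, by simp⟩
      · exact ⟨∅, @MeasurableSet.empty Ω (⨅ u ∈ Set.Ioi s, 𝓕 u), by simpa using hneg_null A hA⟩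
    exact fun A hA => hle _ hA
  -- measurability and integrability
  have hmeas : ∀ t : ℝ≥0, Measurable[𝓕til t] (X t) := fun t =>
    (hm.1 t).mono ((h𝓕_le_ms t).trans (h_ms_le_til t)) le_rfl
  have hsm : ∀ t : ℝ≥0, StronglyMeasurable[F] (X t) := fun t =>
    ((hm.1 t).mono (h_le t) le_rfl).stronglyMeasurable
  have hint : ∀ t : ℝ≥0, Integrable (X t) Ptil := by
    intro t
    refine integrable_of_integrable_trim hFle ?_
    rw [hPtrim]
    exact hm.2.1 t
  -- set integrals transfer from Ptil to P
  have hset : ∀ (t : ℝ≥0) (B : Set Ω), MeasurableSet[F] B →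
      ∫ ω in B, X t ω ∂Ptil = ∫ ω in B, X t ω ∂P := by
    intro t B hB
    rw [setIntegral_trim hFle (hsm t) hB, hPtrim]
  refine ⟨hmeas, hint, fun s t hst => ?_⟩
  refine (ae_eq_condExp_of_forall_setIntegral_eq (h𝓕til_le s) (hint t)
    (fun A _ _ => (hint s).integrableOn) (fun A hA _ => ?_)
    (((hmeas s).mono le_rfl le_rfl).stronglyMeasurable.aestronglyMeasurable)).symm
  obtain ⟨B, hBm, hAB⟩ := happrox s A hA
  have hABae : A =ᵐ[Ptil] B := measure_symmDiff_eq_zero_iff.1 hAB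
  have hBF : MeasurableSet[F] B := h_ms_le_F s _ hBm
  calc ∫ ω in A, X s ω ∂Ptil = ∫ ω in B, X s ω ∂Ptil := setIntegral_congr_set hABae
    _ = ∫ ω in B, X s ω ∂P := hset s B hBF
    _ = ∫ ω in B, X t ω ∂P :=
        (setIntegral_eq_of_iInf h_mono h_le hcont hm hst hBm).symm
    _ = ∫ ω in B, X t ω ∂Ptil := (hset t B hBF).symm
    _ = ∫ ω in A, X t ω ∂Ptil := (setIntegral_congr_set hABae).symm

/-- A standard Brownian motion remains a standard Brownian motion under the
N-augmentation. -/
theorem n_augmentation_brownian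
    (F : MeasurableSpace Ω) (𝓕 : ℝ≥0 → MeasurableSpace Ω)
    (h_mono : Monotone 𝓕) (h_le : ∀ t, 𝓕 t ≤ F)
    (P : @Measure Ω F) (hP : @IsProbabilityMeasure Ω F P)
    (𝓝neg : Set (Set Ω)) (h𝓝 : 𝓝neg = {A | NNegligible 𝓕 (fun s => P s) A})
    (Ftil : MeasurableSpace Ω)
    (hFtil : Ftil = MeasurableSpace.generateFrom ({A | MeasurableSet[F] A} ∪ 𝓝neg))
    (𝓕til : ℝ≥0 → MeasurableSpace Ω)
    (h𝓕til : ∀ t : ℝ≥0, 𝓕til t =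
      MeasurableSpace.generateFrom
        ({A | MeasurableSet[⨅ u ∈ Set.Ioi t, 𝓕 u] A} ∪ 𝓝neg))
    (Ptil : @Measure Ω Ftil)
    (hPtil : ∀ A : Set Ω, MeasurableSet[F] A → Ptil A = P A)
    (X : ℝ≥0 → Ω → ℝ) (hX : IsStdBrownianMotion F 𝓕 P X) :
    IsStdBrownianMotion Ftil 𝓕til Ptil X := by
  obtain ⟨hcont, hzero, hm1, hm2⟩ := hX
  refine ⟨hcont, hzero, ?_, ?_⟩
  · exact isMartingale_naug F 𝓕 h_mono h_le P hP 𝓝neg h𝓝 Ftil hFtil 𝓕til h𝓕til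
      Ptil hPtil X hcont hm1
  · exact isMartingale_naug F 𝓕 h_mono h_le P hP 𝓝neg h𝓝 Ftil hFtil 𝓕til h𝓕til
      Ptil hPtil _ (fun ω => ((hcont ω).pow 2).sub NNReal.continuous_coe) hm2
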